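/- Let t be a positive integer and let A = D^s(Z_3^3) with s = 3 (so A = 17), u = ⌊(17 − 3)/D(Z_3^3)⌋. Then D(Z_3 ⊕ Z_3 ⊕ Z_{3t}) ≤ 3t + 8. -/

import Mathlib

/-- The Davenport constant: the smallest `d` such that every multiset of `d`
elements of `G` contains a nonempty zero-sum sub-multiset. -/
noncomputable def davenport (G : Type*) [AddCommGroup G] : ℕ :=
  sInf {d | ∀ S : Multiset G, Multiset.card S = d →
    ∃ T, T ≤ S ∧ T ≠ 0 ∧ T.sum = 0}

abbrev V3 := ZMod 3 × ZMod 3 × ZMod 3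

def addP (x y : ℕ) : ℕ :=
  (x % 3 + y % 3) % 3 + 3 * ((x / 3 % 3 + y / 3 % 3) % 3) + 9 * ((x / 9 + y / 9) % 3)

def negP (x : ℕ) : ℕ := addP x x

def compatP : List ℕ → ℕ → Bool
  | [], _ => true
  | x :: rest, p =>
    (rest.all fun y => x == y || !(addP (addP x y) p == 0)) && compatP rest p

def exP : List ℕ → List ℕ → ℕ → Bool
  | _, _, 0 => true
  | _, [], _+1 => false
  | acc, d :: rest, n+1 =>
    (compatP acc d && exP (d :: acc) rest n) ||
    (compatP acc (negP d) && exP (negP d :: acc) rest n) ||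
    (n+1 ≤ rest.length && exP acc rest (n+1))

def DlistV : List V3 :=
  [(1,0,0),(0,1,0),(1,1,0),(2,1,0),(0,0,1),(1,0,1),(2,0,1),
   (0,1,1),(1,1,1),(2,1,1),(0,2,1),(1,2,1),(2,2,1)]

def encV (v : V3) : ℕ := v.1.val + 3 * v.2.1.val + 9 * v.2.2.val

set_option maxRecDepth 100000 in
set_option maxHeartbeats 4000000 in
theorem exP_false : exP [] (DlistV.map encV) 9 = false := by decide

lemma encV_add : ∀ x y : V3, addP (encV x) (encV y) = encV (x + y) := by decide
lemma encV_neg : ∀ x : V3, negP (encV x) = encV (-x) := by decide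
lemma encV_zero : ∀ x : V3, encV x = 0 → x = 0 := by decide
lemma char3V : ∀ a b : V3, a + a + b = 0 → b = a := by decide
lemma coverV : ∀ v : V3, v ≠ 0 → v ∈ DlistV ∨ -v ∈ DlistV := by decide

section Sound

variable (s : Finset V3)
variable (h3 : ∀ x ∈ s, ∀ y ∈ s, ∀ z ∈ s, x ≠ y → x ≠ z → y ≠ z → x + y + z ≠ 0)

include h3 in
lemma key3 : ∀ x ∈ s, ∀ y ∈ s, ∀ p ∈ s, x ≠ y → x + y + p ≠ 0 := by
  intro x hx y hy p hp hxy h0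
  by_cases hpx : p = x
  · subst hpx; exact hxy (char3V p y (by rw [← h0]; ring)).symm
  by_cases hpy : p = y
  · subst hpy; exact hxy (char3V p x (by rw [← h0]; ring))
  exact h3 x hx y hy p hp hxy (Ne.symm hpx) (Ne.symm hpy) h0

include h3 in
lemma compatP_true (p : V3) (hp : p ∈ s) :
    ∀ acc : List V3, (∀ a ∈ acc, a ∈ s) → compatP (acc.map encV) (encV p) = true := by
  intro acc
  induction acc with
  | nil => intro _; rfl
  | cons x rest ih =>
    intro h
    have hx : x ∈ s := h x List.mem_cons_self
    simp only [List.map_cons, compatP, Bool.and_eq_true]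
    refine ⟨?_, ih fun a ha => h a (List.mem_cons_of_mem _ ha)⟩
    rw [List.all_eq_true]
    intro ey hey
    obtain ⟨y, hy, rfl⟩ := List.mem_map.mp hey
    have hys : y ∈ s := h y (List.mem_cons_of_mem _ hy)
    by_cases hxy : x = y
    · subst hxy; simp
    · have hne : x + y + p ≠ 0 := key3 s h3 x hx y hys p hp hxy
      have : addP (addP (encV x) (encV y)) (encV p) ≠ 0 := by
        rw [encV_add, encV_add]
        intro hc
        exact hne (encV_zero _ hc)
      simp [this]

include h3 in
lemma soundV :
    ∀ (dirs acc : List V3) (need : ℕ), (∀ a ∈ acc, a ∈ s) →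
      need ≤ dirs.countP (fun d => decide (d ∈ s ∨ -d ∈ s)) →
      exP (acc.map encV) (dirs.map encV) need = true := by
  intro dirs
  induction dirs with
  | nil =>
    intro acc need _ hc
    simp only [List.countP_nil, Nat.le_zero] at hc
    subst hc; rfl
  | cons d rest ih =>
    intro acc need hacc hc
    cases need with
    | zero => rfl
    | succ n =>
      rw [List.countP_cons] at hc
      by_cases hd : d ∈ s
      · have hcompat := compatP_true s h3 d hd acc hacc
        have hrec : exP ((d :: acc).map encV) (rest.map encV) n = true := by
          apply ih (d :: acc) n
          · intro a ha
            rcases List.mem_cons.mp ha with h | h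
            · exact h ▸ hd
            · exact hacc a h
          · have hx : decide (d ∈ s ∨ -d ∈ s) = true := by simp [hd]
            rw [hx] at hc; simp only [if_pos] at hc; omega
        simp only [List.map_cons, exP, Bool.or_eq_true, Bool.and_eq_true]
        exact Or.inl (Or.inl ⟨hcompat, by simpa using hrec⟩)
      · by_cases hnd : -d ∈ s
        · have hcompat := compatP_true s h3 (-d) hnd acc hacc
          have hrec : exP ((-d :: acc).map encV) (rest.map encV) n = true := by
            apply ih (-d :: acc) n
            · intro a ha
              rcases List.mem_cons.mp ha with h | h
              · exact h ▸ hnd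
              · exact hacc a h
            · have hx : decide (d ∈ s ∨ -d ∈ s) = true := by simp [hnd]
              rw [hx] at hc; simp only [if_pos] at hc; omega
          simp only [List.map_cons, exP, Bool.or_eq_true, Bool.and_eq_true]
          refine Or.inl (Or.inr ⟨by rw [encV_neg]; exact hcompat, ?_⟩)
          rw [encV_neg]
          simpa using hrec
        · have hcnt : decide (d ∈ s ∨ -d ∈ s) = false := by simp [hd, hnd]
          have hc' : n + 1 ≤ List.countP (fun d => decide (d ∈ s ∨ -d ∈ s)) rest := by
            rw [hcnt] at hc; simpa using hc
          have hlen : n + 1 ≤ rest.length :=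
            le_trans hc' List.countP_le_length
          have hrec : exP (acc.map encV) (rest.map encV) (n+1) = true :=
            ih acc (n+1) hacc hc'
          simp only [List.map_cons, exP, Bool.or_eq_true, Bool.and_eq_true]
          refine Or.inr ⟨?_, hrec⟩
          simp [List.length_map, hlen]

end Sound

lemma F9 (s : Finset V3) (h0 : ∀ x ∈ s, x ≠ 0)
    (h2 : ∀ x ∈ s, ∀ y ∈ s, x ≠ y → x + y ≠ 0) (hcard : 9 ≤ s.card) :
    ∃ x ∈ s, ∃ y ∈ s, ∃ z ∈ s, x ≠ y ∧ x ≠ z ∧ y ≠ z ∧ x + y + z = 0 := by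
  by_contra hcon
  push_neg at hcon
  have h3 : ∀ x ∈ s, ∀ y ∈ s, ∀ z ∈ s, x ≠ y → x ≠ z → y ≠ z → x + y + z ≠ 0 :=
    fun x hx y hy z hz hxy hxz hyz => hcon x hx y hy z hz hxy hxz hyz
  -- count bound
  have hcnt : 9 ≤ DlistV.countP (fun d => decide (d ∈ s ∨ -d ∈ s)) := by
    have hinj : s.card ≤ ((DlistV.filter (fun d => decide (d ∈ s ∨ -d ∈ s))).toFinset).card := by
      apply Finset.card_le_card_of_injOn (fun v => if v ∈ DlistV then v else -v)
      · intro v hv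
        rw [Finset.mem_coe] at hv; rw [Finset.mem_coe, List.mem_toFinset, List.mem_filter]
        by_cases hvD : v ∈ DlistV
        · simp only [if_pos hvD]
          exact ⟨hvD, by simp [hv]⟩
        · have := coverV v (h0 v hv)
          rcases this with h | h
          · exact absurd h hvD
          · simp only [if_neg hvD]
            refine ⟨h, ?_⟩
            simp only [neg_neg]
            simp [hv]
      · intro u hu' v hv' huv
        have hu : u ∈ s := hu'
        have hv : v ∈ s := hv'
        simp only at huv
        by_cases h1 : u ∈ DlistV <;> by_cases hb : v ∈ DlistV
        · rwa [if_pos h1, if_pos hb] at huv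
        · rw [if_pos h1, if_neg hb] at huv
          by_cases heq : u = v
          · exact heq
          · exact absurd (by rw [huv]; exact neg_add_cancel v) (h2 u hu v hv heq)
        · rw [if_neg h1, if_pos hb] at huv
          by_cases heq : u = v
          · exact heq
          · exact absurd (by rw [← huv]; exact add_neg_cancel u) (h2 u hu v hv heq)
        · rw [if_neg h1, if_neg hb, neg_inj] at huv; exact huv
    calc 9 ≤ s.card := hcard
      _ ≤ _ := hinj
      _ ≤ (DlistV.filter (fun d => decide (d ∈ s ∨ -d ∈ s))).length := List.toFinset_card_le _
      _ = DlistV.countP (fun d => decide (d ∈ s ∨ -d ∈ s)) := List.countP_eq_length_filter.symm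
  have := soundV s h3 DlistV [] 9 (by intro a ha; cases ha) hcnt
  rw [List.map_nil, exP_false] at this
  cases this
-- Part 2: eta17 over V3

lemma triple_le {x y z : V3} {M : Multiset V3} (hx : x ∈ M) (hy : y ∈ M) (hz : z ∈ M)
    (hxy : x ≠ y) (hxz : x ≠ z) (hyz : y ≠ z) : ({x, y, z} : Multiset V3) ≤ M := by
  have hy' : y ∈ M.erase x := (Multiset.mem_erase_of_ne (Ne.symm hxy)).mpr hy
  have hz' : z ∈ (M.erase x).erase y := by
    rw [Multiset.mem_erase_of_ne (Ne.symm hyz), Multiset.mem_erase_of_ne (Ne.symm hxz)]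
    exact hz
  have h1 : ({z} : Multiset V3) ≤ (M.erase x).erase y := Multiset.singleton_le.mpr hz'
  have h2 : (y ::ₘ {z} : Multiset V3) ≤ y ::ₘ (M.erase x).erase y := Multiset.cons_le_cons _ h1
  rw [Multiset.cons_erase hy'] at h2
  have h3 : (x ::ₘ y ::ₘ {z} : Multiset V3) ≤ x ::ₘ M.erase x := Multiset.cons_le_cons _ h2
  rwa [Multiset.cons_erase hx] at h3

lemma char3_triple : ∀ x : V3, x + x + x = 0 := by decide
lemma char3_neg_self : ∀ x : V3, x = -x → x = 0 := by decide

lemma eta17 (M : Multiset V3) (hM : 17 ≤ Multiset.card M) :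
    ∃ T ≤ M, T ≠ 0 ∧ Multiset.card T ≤ 3 ∧ T.sum = 0 := by
  by_cases h0 : (0 : V3) ∈ M
  · exact ⟨{0}, Multiset.singleton_le.mpr h0, by simp, by simp, by simp⟩
  by_cases hanti : ∃ x ∈ M, -x ∈ M
  · obtain ⟨x, hx, hnx⟩ := hanti
    have hxne : x ≠ -x := fun h => h0 (char3_neg_self x h ▸ hx)
    refine ⟨{x, -x}, ?_, by simp, by simp, by simp⟩
    have h1 : -x ∈ M.erase x := (Multiset.mem_erase_of_ne (Ne.symm hxne)).mpr hnx
    have h2 : (x ::ₘ {-x} : Multiset V3) ≤ x ::ₘ M.erase x :=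
      Multiset.cons_le_cons _ (Multiset.singleton_le.mpr h1)
    rwa [Multiset.cons_erase hx] at h2
  by_cases hrep : ∃ x : V3, 3 ≤ M.count x
  · obtain ⟨x, hx⟩ := hrep
    refine ⟨Multiset.replicate 3 x, ?_, by simp, by simp, ?_⟩
    · rw [Multiset.le_iff_count]
      intro a
      by_cases ha : a = x
      · subst ha; simpa using hx
      · simp [Multiset.count_replicate, ha]
    · show (Multiset.replicate 3 x).sum = 0
      rw [Multiset.sum_replicate]
      have h := char3_triple x
      show 3 • x = 0
      rw [show (3:ℕ) • x = x + x + x by module]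
      exact h
  -- all multiplicities ≤ 2
  push_neg at hanti hrep
  have hcard : 9 ≤ M.toFinset.card := by
    have h1 : Multiset.card M = ∑ a ∈ M.toFinset, M.count a :=
      (Multiset.toFinset_sum_count_eq M).symm
    have h2 : ∑ a ∈ M.toFinset, M.count a ≤ ∑ _a ∈ M.toFinset, 2 :=
      Finset.sum_le_sum fun a _ => by have := hrep a; omega
    rw [Finset.sum_const, smul_eq_mul] at h2
    omega
  have h0' : ∀ x ∈ M.toFinset, x ≠ 0 := by
    intro x hx h
    exact h0 (h ▸ Multiset.mem_toFinset.mp hx)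
  have h2' : ∀ x ∈ M.toFinset, ∀ y ∈ M.toFinset, x ≠ y → x + y ≠ 0 := by
    intro x hx y hy _ hsum
    have hyx : y = -x := by rw [← neg_eq_of_add_eq_zero_right hsum]
    exact hanti x (Multiset.mem_toFinset.mp hx) (hyx ▸ Multiset.mem_toFinset.mp hy)
  obtain ⟨x, hx, y, hy, z, hz, hxy, hxz, hyz, hsum⟩ := F9 M.toFinset h0' h2' hcard
  refine ⟨{x, y, z}, triple_le (Multiset.mem_toFinset.mp hx) (Multiset.mem_toFinset.mp hy)
    (Multiset.mem_toFinset.mp hz) hxy hxz hyz, by simp, by simp, ?_⟩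
  show (x ::ₘ y ::ₘ {z}).sum = 0
  simp only [Multiset.sum_cons, Multiset.sum_singleton]
  rw [← add_assoc]
  exact hsum
-- Part 3: D7 via Chevalley-Warning

lemma fintype_card_indep {α : Type*} (I1 I2 : Fintype α) :
    @Fintype.card α I1 = @Fintype.card α I2 := by
  congr 1
  exact Subsingleton.elim _ _

lemma zmod3_sq {u : ZMod 3} (hu : u ≠ 0) : u ^ 2 = 1 := by revert u; decide

open MvPolynomial in
lemma D7 (M : Multiset V3) (hM : Multiset.card M = 7) :
    ∃ T ≤ M, T ≠ 0 ∧ T.sum = 0 := by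
  haveI : Fact (Nat.Prime 3) := ⟨by norm_num⟩
  set l := M.toList with hldef
  have hl : l.length = 7 := by rw [hldef, Multiset.length_toList, hM]
  have hMl : (l : Multiset V3) = M := Multiset.coe_toList M
  let g : Fin 3 → V3 → ZMod 3 := ![fun v => v.1, fun v => v.2.1, fun v => v.2.2]
  let poly : (V3 → ZMod 3) → MvPolynomial (Fin l.length) (ZMod 3) :=
    fun c => ∑ i : Fin l.length, C (c (l.get i)) * X i ^ 2
  have hdeg : ∀ c, (poly c).totalDegree ≤ 2 := by
    intro c
    refine le_trans (totalDegree_finset_sum _ _) (Finset.sup_le fun i _ => ?_)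
    refine le_trans (totalDegree_mul _ _) ?_
    rw [totalDegree_C]
    simpa using le_trans (totalDegree_pow _ _) (by simp [totalDegree_X])
  have hsumdeg : (∑ j : Fin 3, (poly (g j)).totalDegree) < Fintype.card (Fin l.length) := by
    have h6 : ∑ j : Fin 3, (poly (g j)).totalDegree ≤ 6 := by
      calc ∑ j : Fin 3, (poly (g j)).totalDegree ≤ ∑ _j : Fin 3, 2 :=
            Finset.sum_le_sum fun j _ => hdeg (g j)
        _ = 6 := by simp
    rw [Fintype.card_fin]
    omega
  obtain ⟨k, hk⟩ := char_dvd_card_solutions_of_fintype_sum_lt 3 hsumdeg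
  have hdvd : (3:ℕ) ∣ Fintype.card { x : Fin l.length → ZMod 3 // ∀ j, eval x (poly (g j)) = 0 } :=
    ⟨k, (fintype_card_indep _ _).trans hk⟩
  have heval : ∀ (x : Fin l.length → ZMod 3) c,
      eval x (poly c) = ∑ i : Fin l.length, c (l.get i) * x i ^ 2 := by
    intro x c
    rw [map_sum]
    refine Finset.sum_congr rfl fun i _ => ?_
    rw [map_mul, map_pow, eval_C, eval_X]
  have h0 : ∀ j : Fin 3, eval (fun _ => (0:ZMod 3)) (poly (g j)) = 0 := by
    intro j; rw [heval]; simp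
  have hcard1 : 0 < Fintype.card { x : Fin l.length → ZMod 3 // ∀ j, eval x (poly (g j)) = 0 } :=
    Fintype.card_pos_iff.mpr ⟨⟨_, h0⟩⟩
  have hcard : 1 < Fintype.card { x : Fin l.length → ZMod 3 // ∀ j, eval x (poly (g j)) = 0 } := by
    have h3le : 3 ≤ Fintype.card { x : Fin l.length → ZMod 3 // ∀ j, eval x (poly (g j)) = 0 } :=
      Nat.le_of_dvd hcard1 hdvd
    omega
  obtain ⟨y, hy⟩ := Fintype.exists_ne_of_one_lt_card hcard ⟨_, h0⟩
  have hx0 : (y : Fin l.length → ZMod 3) ≠ fun _ => 0 := fun h => hy (Subtype.ext h)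
  obtain ⟨i0, hi0⟩ := Function.ne_iff.mp hx0
  let idx : Finset (Fin l.length) := Finset.univ.filter fun i => (y : Fin l.length → ZMod 3) i ≠ 0
  have hi0idx : i0 ∈ idx := by simp only [idx, Finset.mem_filter, Finset.mem_univ, true_and]; exact hi0
  refine ⟨idx.val.map l.get, ?_, ?_, ?_⟩
  · have h1 : idx.val ≤ (Finset.univ : Finset (Fin l.length)).val :=
      Finset.val_le_iff.mpr (Finset.subset_univ _)
    refine le_trans (Multiset.map_le_map h1) ?_
    rw [Fin.univ_val_map, List.ofFn_get, hMl]
  · intro h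
    have hmem : l.get i0 ∈ idx.val.map l.get := Multiset.mem_map_of_mem _ hi0idx
    rw [h] at hmem
    exact Multiset.notMem_zero _ hmem
  · have hTsum : (idx.val.map l.get).sum = ∑ i ∈ idx, l.get i :=
      (Finset.sum_eq_multiset_sum idx l.get).symm
    rw [hTsum]
    have hcomp : ∀ c : V3 → ZMod 3, (∀ x : V3 → ZMod 3, True) → True := fun _ _ => trivial
    have key : ∀ j : Fin 3, ∑ i ∈ idx, g j (l.get i) = 0 := by
      intro j
      have hev := y.2 j
      rw [heval] at hev
      have : ∑ i ∈ idx, g j (l.get i)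
          = ∑ i : Fin l.length, g j (l.get i) * (y : Fin l.length → ZMod 3) i ^ 2 := by
        rw [Finset.sum_filter]
        refine Finset.sum_congr rfl fun i _ => ?_
        by_cases hyi : (y : Fin l.length → ZMod 3) i ≠ 0
        · rw [if_pos hyi, zmod3_sq hyi, mul_one]
        · push_neg at hyi
          rw [if_neg (by simpa using hyi), hyi]
          ring
      rw [this, hev]
    have k0 : ∑ i ∈ idx, (l.get i).1 = 0 := key 0
    have k1 : ∑ i ∈ idx, (l.get i).2.1 = 0 := key 1
    have k2 : ∑ i ∈ idx, (l.get i).2.2 = 0 := key 2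
    have fst_sum : (∑ i ∈ idx, l.get i).1 = ∑ i ∈ idx, (l.get i).1 :=
      map_sum (AddMonoidHom.fst (ZMod 3) (ZMod 3 × ZMod 3)) _ idx
    have snd_sum : (∑ i ∈ idx, l.get i).2 = ∑ i ∈ idx, (l.get i).2 :=
      map_sum (AddMonoidHom.snd (ZMod 3) (ZMod 3 × ZMod 3)) _ idx
    have snd_fst_sum : (∑ i ∈ idx, (l.get i).2).1 = ∑ i ∈ idx, (l.get i).2.1 :=
      map_sum (AddMonoidHom.fst (ZMod 3) (ZMod 3)) _ idx
    have snd_snd_sum : (∑ i ∈ idx, (l.get i).2).2 = ∑ i ∈ idx, (l.get i).2.2 :=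
      map_sum (AddMonoidHom.snd (ZMod 3) (ZMod 3)) _ idx
    have hfinal : (∑ i ∈ idx, l.get i) = ((0 : ZMod 3), ((0 : ZMod 3), (0 : ZMod 3))) := by
      rw [Prod.ext_iff]
      refine ⟨by rw [fst_sum]; exact k0, ?_⟩
      rw [Prod.ext_iff]
      exact ⟨by rw [snd_sum, snd_fst_sum]; exact k1, by rw [snd_sum, snd_snd_sum]; exact k2⟩
    rw [hfinal]
    rfl
-- Part 4: multiset utilities and the main theorem

lemma exists_sub_of_le_map {α β : Type*} [DecidableEq α] [DecidableEq β] (f : α → β) :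
    ∀ (T' : Multiset β) (M : Multiset α), T' ≤ M.map f →
      ∃ T ≤ M, T.map f = T' := by
  intro T'
  induction T' using Multiset.induction_on with
  | empty => exact fun M _ => ⟨0, Multiset.zero_le M, Multiset.map_zero f⟩
  | cons a T' ih =>
    intro M h
    have ha : a ∈ M.map f := Multiset.mem_of_le h (Multiset.mem_cons_self a T')
    obtain ⟨x, hxM, rfl⟩ := Multiset.mem_map.mp ha
    have h2 : T' ≤ (M.map f).erase (f x) := by
      have h' := Multiset.erase_le_erase (f x) h
      rwa [Multiset.erase_cons_head] at h'
    have h3 : (M.map f).erase (f x) = (M.erase x).map f := by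
      conv_lhs => rw [← Multiset.cons_erase hxM]
      rw [Multiset.map_cons, Multiset.erase_cons_head]
    rw [h3] at h2
    obtain ⟨T0, hT0le, hT0map⟩ := ih (M.erase x) h2
    refine ⟨x ::ₘ T0, ?_, by rw [Multiset.map_cons, hT0map]⟩
    calc x ::ₘ T0 ≤ x ::ₘ M.erase x := Multiset.cons_le_cons x hT0le
      _ = M := Multiset.cons_erase hxM

lemma exists_sub_card {α : Type*} (M : Multiset α) (n : ℕ) (h : n ≤ Multiset.card M) :
    ∃ N ≤ M, Multiset.card N = n := by
  refine ⟨(M.toList.take n : List α), ?_, ?_⟩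
  · calc ((M.toList.take n : List α) : Multiset α) ≤ (M.toList : Multiset α) :=
        Multiset.coe_le.mpr (List.take_sublist n M.toList).subperm
      _ = M := Multiset.coe_toList M
  · rw [Multiset.coe_card, List.length_take, Multiset.length_toList]
    omega

lemma add_le_of_le_sub {α : Type*} [DecidableEq α] (T L S : Multiset α) (hL : L ≤ S) (hT : T ≤ S - L) :
    T + L ≤ S := by
  have h := add_le_add_right hT L
  rwa [add_tsub_cancel_of_le hL, add_comm] at h

abbrev G3 (t : ℕ) := ZMod 3 × ZMod 3 × ZMod (3 * t)

def pi3 (t : ℕ) : G3 t →+ V3 :=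
  AddMonoidHom.mk' (fun x => (x.1, x.2.1, ZMod.castHom ⟨t, rfl⟩ (ZMod 3) x.2.2))
    (fun a b => Prod.ext rfl (Prod.ext rfl (map_add (ZMod.castHom ⟨t, rfl⟩ (ZMod 3)) a.2.2 b.2.2)))

lemma etaG (t : ℕ) (M : Multiset (G3 t)) (h : 17 ≤ Multiset.card M) :
    ∃ T ≤ M, T ≠ 0 ∧ Multiset.card T ≤ 3 ∧ (T.map (pi3 t)).sum = 0 := by
  obtain ⟨T', hle, hne, hc, hs⟩ := eta17 (M.map (pi3 t)) (by rwa [Multiset.card_map])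
  obtain ⟨T, hTM, hmap⟩ := exists_sub_of_le_map (pi3 t) T' M hle
  have hcards : Multiset.card T = Multiset.card T' := by rw [← hmap, Multiset.card_map]
  refine ⟨T, hTM, ?_, by omega, by rw [hmap]; exact hs⟩
  intro h0
  apply hne
  rw [← hmap, h0, Multiset.map_zero]

lemma d7G (t : ℕ) (M : Multiset (G3 t)) (h : 7 ≤ Multiset.card M) :
    ∃ T ≤ M, T ≠ 0 ∧ Multiset.card T ≤ 7 ∧ (T.map (pi3 t)).sum = 0 := by
  obtain ⟨N, hNM, hNcard⟩ := exists_sub_card M 7 h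
  obtain ⟨T', hle, hne, hs⟩ := D7 (N.map (pi3 t)) (by rw [Multiset.card_map]; exact hNcard)
  obtain ⟨T, hTN, hmap⟩ := exists_sub_of_le_map (pi3 t) T' N hle
  have hcards : Multiset.card T = Multiset.card T' := by rw [← hmap, Multiset.card_map]
  have hcardT' : Multiset.card T' ≤ 7 := by
    have := Multiset.card_le_card hle
    rw [Multiset.card_map, hNcard] at this
    exact this
  refine ⟨T, le_trans hTN hNM, ?_, by omega, by rw [hmap]; exact hs⟩
  intro h0
  apply hne
  rw [← hmap, h0, Multiset.map_zero]

lemma phase1 (t : ℕ) (S : Multiset (G3 t)) (hS : Multiset.card S = 3*t+8) :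
    ∀ j, j + 2 ≤ t → ∃ B : ℕ → Multiset (G3 t),
      (∑ i ∈ Finset.range j, B i) ≤ S ∧ Multiset.card (∑ i ∈ Finset.range j, B i) ≤ 3*j ∧
      ∀ i < j, B i ≠ 0 ∧ ((B i).map (pi3 t)).sum = 0 := by
  intro j
  induction j with
  | zero =>
    intro _
    exact ⟨fun _ => 0, by simp, by simp, fun i hi => absurd hi (Nat.not_lt_zero i)⟩
  | succ j ih =>
    intro hj
    obtain ⟨B, hle, hcard, hprop⟩ := ih (by omega)
    have hRcard : 17 ≤ Multiset.card (S - ∑ i ∈ Finset.range j, B i) := by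
      rw [Multiset.card_sub hle, hS]; omega
    obtain ⟨T, hTR, hTne, hTcard, hTsum⟩ := etaG t _ hRcard
    have heq : ∑ i ∈ Finset.range j, Function.update B j T i = ∑ i ∈ Finset.range j, B i :=
      Finset.sum_congr rfl fun i hi =>
        Function.update_of_ne (by simp only [Finset.mem_range] at hi; omega) _ _
    have hTS : T + ∑ i ∈ Finset.range j, B i ≤ S := add_le_of_le_sub _ _ _ hle hTR
    refine ⟨Function.update B j T, ?_, ?_, ?_⟩
    · rw [Finset.sum_range_succ, heq, Function.update_self, add_comm]
      exact hTS
    · rw [Finset.sum_range_succ, heq, Function.update_self, Multiset.card_add]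
      omega
    · intro i hi
      rcases Nat.lt_or_ge i j with h | h
      · rw [Function.update_of_ne (by omega)]
        exact hprop i h
      · have : i = j := by omega
        subst this
        rw [Function.update_self]
        exact ⟨hTne, hTsum⟩

lemma blocks_all (t : ℕ) (ht : 1 ≤ t) (S : Multiset (G3 t)) (hS : Multiset.card S = 3*t+8) :
    ∃ B : ℕ → Multiset (G3 t), (∑ i ∈ Finset.range t, B i) ≤ S ∧
      ∀ i < t, B i ≠ 0 ∧ ((B i).map (pi3 t)).sum = 0 := by
  rcases Nat.lt_or_ge t 2 with h1 | h2
  · have ht1 : t = 1 := by omega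
    subst ht1
    obtain ⟨T, hTS, hTne, _, hTsum⟩ := d7G 1 S (by rw [hS]; omega)
    refine ⟨fun _ => T, ?_, ?_⟩
    · simpa [Finset.sum_range_one] using hTS
    · intro i hi
      have : i = 0 := by omega
      subst this
      exact ⟨hTne, hTsum⟩
  · obtain ⟨k, rfl⟩ : ∃ k, t = k + 2 := ⟨t - 2, by omega⟩
    obtain ⟨B, hle, hcard, hprop⟩ := phase1 (k+2) S hS k (le_refl _)
    have hR1 : 7 ≤ Multiset.card (S - ∑ i ∈ Finset.range k, B i) := by
      rw [Multiset.card_sub hle, hS]; omega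
    obtain ⟨T1, hT1, hT1ne, hT1card, hT1sum⟩ := d7G _ _ hR1
    have hT1S : T1 + ∑ i ∈ Finset.range k, B i ≤ S := add_le_of_le_sub _ _ _ hle hT1
    have hR2 : 7 ≤ Multiset.card (S - (T1 + ∑ i ∈ Finset.range k, B i)) := by
      rw [Multiset.card_sub hT1S, hS, Multiset.card_add]
      omega
    obtain ⟨T2, hT2, hT2ne, _, hT2sum⟩ := d7G _ _ hR2
    have hT2S : T2 + (T1 + ∑ i ∈ Finset.range k, B i) ≤ S := add_le_of_le_sub _ _ _ hT1S hT2
    refine ⟨fun i => if i = k then T1 else if i = k+1 then T2 else B i, ?_, ?_⟩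
    · have hsum : ∑ i ∈ Finset.range (k+2),
          (if i = k then T1 else if i = k+1 then T2 else B i)
          = ((∑ i ∈ Finset.range k, B i) + T1) + T2 := by
        rw [Finset.sum_range_succ, Finset.sum_range_succ]
        congr 1
        · congr 1
          · refine Finset.sum_congr rfl fun i hi => ?_
            simp only [Finset.mem_range] at hi
            rw [if_neg (by omega), if_neg (by omega)]
          · rw [if_pos rfl]
        · rw [if_neg (by omega), if_pos rfl]
      rw [hsum]
      calc (∑ i ∈ Finset.range k, B i) + T1 + T2 = T2 + (T1 + ∑ i ∈ Finset.range k, B i) := by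
            abel
        _ ≤ S := hT2S
    · intro i hi
      beta_reduce
      rcases Nat.lt_or_ge i k with h | h
      · rw [if_neg (by omega), if_neg (by omega)]
        exact hprop i h
      · rcases Nat.lt_or_ge i (k+1) with h' | h'
        · have hik : i = k := by omega
          rw [if_pos hik]
          exact ⟨hT1ne, hT1sum⟩
        · have hik : i = k + 1 := by omega
          rw [if_neg (by omega), if_pos hik]
          exact ⟨hT2ne, hT2sum⟩

lemma main_mem (t : ℕ) (ht : 0 < t) (S : Multiset (G3 t)) (hS : Multiset.card S = 3*t+8) :
    ∃ T, T ≤ S ∧ T ≠ 0 ∧ T.sum = 0 := by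
  haveI : NeZero t := ⟨ht.ne'⟩
  haveI : NeZero (3*t) := ⟨by omega⟩
  obtain ⟨B, hle, hprop⟩ := blocks_all t ht S hS
  have hpi0 : ∀ i < t, (pi3 t) (B i).sum = 0 := by
    intro i hi
    rw [map_multiset_sum]
    exact (hprop i hi).2
  have hcomp1 : ∀ i < t, ((B i).sum).1 = 0 := fun i hi => congrArg Prod.fst (hpi0 i hi)
  have hcomp2 : ∀ i < t, ((B i).sum).2.1 = 0 := fun i hi =>
    congrArg (fun p => p.2.1) (hpi0 i hi)
  have hcomp3 : ∀ i < t, ZMod.castHom ⟨t, rfl⟩ (ZMod 3) ((B i).sum).2.2 = 0 := fun i hi =>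
    congrArg (fun p => p.2.2) (hpi0 i hi)
  have h3dvd : ∀ i < t, (3:ℕ) ∣ (((B i).sum).2.2).val := by
    intro i hi
    have h := hcomp3 i hi
    rw [ZMod.castHom_apply] at h
    rw [← ZMod.natCast_eq_zero_iff]
    rw [ZMod.natCast_val]
    exact h
  -- pigeonhole on partial sums
  set d : ℕ → ℕ := fun i => (((B i).sum).2.2).val / 3 with hd
  have hcard : Fintype.card (ZMod t) < Fintype.card (Fin (t+1)) := by
    rw [ZMod.card, Fintype.card_fin]; omega
  obtain ⟨j1, j2, hne, hfeq⟩ := Fintype.exists_ne_map_eq_of_card_lt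
    (fun j : Fin (t+1) => ((∑ i ∈ Finset.range (j:ℕ), d i : ℕ) : ZMod t)) hcard
  obtain ⟨j, j', hjj, hfeq⟩ : ∃ j j' : Fin (t+1), (j:ℕ) < (j':ℕ) ∧
      ((∑ i ∈ Finset.range (j:ℕ), d i : ℕ) : ZMod t)
        = ((∑ i ∈ Finset.range (j':ℕ), d i : ℕ) : ZMod t) := by
    rcases Ne.lt_or_gt hne with h | h
    · exact ⟨j1, j2, h, hfeq⟩
    · exact ⟨j2, j1, h, hfeq.symm⟩
  have hsumle : (∑ i ∈ Finset.range (j:ℕ), d i) ≤ (∑ i ∈ Finset.range (j':ℕ), d i) :=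
    Finset.sum_le_sum_of_subset (by
      intro x hx
      simp only [Finset.mem_range] at hx ⊢
      omega)
  have hdvdt : t ∣ (∑ i ∈ Finset.range (j':ℕ), d i) - (∑ i ∈ Finset.range (j:ℕ), d i) :=
    (Nat.modEq_iff_dvd' hsumle).mp ((ZMod.natCast_eq_natCast_iff _ _ _).mp hfeq)
  have hIco : (∑ i ∈ Finset.range (j:ℕ), d i) + (∑ i ∈ Finset.Ico (j:ℕ) (j':ℕ), d i)
      = (∑ i ∈ Finset.range (j':ℕ), d i) := by
    rw [Finset.range_eq_Ico, Finset.range_eq_Ico]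
    exact Finset.sum_Ico_consecutive d (Nat.zero_le _) (le_of_lt hjj)
  have hdvdIco : t ∣ (∑ i ∈ Finset.Ico (j:ℕ) (j':ℕ), d i) := by
    have heq : (∑ i ∈ Finset.Ico (j:ℕ) (j':ℕ), d i)
        = (∑ i ∈ Finset.range (j':ℕ), d i) - (∑ i ∈ Finset.range (j:ℕ), d i) := by omega
    rw [heq]
    exact hdvdt
  have hjt : (j:ℕ) < t := by
    have := j'.is_le
    omega
  have hvals : ∀ i ∈ Finset.Ico (j:ℕ) (j':ℕ), (((B i).sum).2.2).val = 3 * d i := by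
    intro i hi
    simp only [Finset.mem_Ico] at hi
    have hit : i < t := by
      have := j'.is_le
      omega
    exact (Nat.mul_div_cancel' (h3dvd i hit)).symm
  have hdvd2 : (3*t) ∣ (∑ i ∈ Finset.Ico (j:ℕ) (j':ℕ), (((B i).sum).2.2).val) := by
    rw [Finset.sum_congr rfl hvals, ← Finset.mul_sum]
    exact mul_dvd_mul_left 3 hdvdIco
  refine ⟨∑ i ∈ Finset.Ico (j:ℕ) (j':ℕ), B i, ?_, ?_, ?_⟩
  · calc (∑ i ∈ Finset.Ico (j:ℕ) (j':ℕ), B i) ≤ ∑ i ∈ Finset.range t, B i :=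
        Finset.sum_le_sum_of_subset (by
          intro x hx
          simp only [Finset.mem_Ico, Finset.mem_range] at hx ⊢
          have := j'.is_le
          omega)
      _ ≤ S := hle
  · intro h0
    have hBj : B j ≤ 0 := by
      rw [← h0]
      exact Finset.single_le_sum (fun i _ => Multiset.zero_le (B i))
        (by simp only [Finset.mem_Ico]; omega)
    exact (hprop j hjt).1 (Multiset.le_zero.mp hBj)
  · have hsumsum : (∑ i ∈ Finset.Ico (j:ℕ) (j':ℕ), B i).sum
        = ∑ i ∈ Finset.Ico (j:ℕ) (j':ℕ), (B i).sum := by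
      rw [← Multiset.coe_sumAddMonoidHom]
      exact map_sum Multiset.sumAddMonoidHom B (Finset.Ico (j:ℕ) (j':ℕ))
    rw [hsumsum]
    have hmem_t : ∀ i ∈ Finset.Ico (j:ℕ) (j':ℕ), i < t := by
      intro i hi
      simp only [Finset.mem_Ico] at hi
      have := j'.is_le
      omega
    have hsnd : (∑ i ∈ Finset.Ico (j:ℕ) (j':ℕ), (B i).sum).2
        = ∑ i ∈ Finset.Ico (j:ℕ) (j':ℕ), ((B i).sum).2 :=
      map_sum (AddMonoidHom.snd (ZMod 3) (ZMod 3 × ZMod (3*t))) _ _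
    have hc1 : (∑ i ∈ Finset.Ico (j:ℕ) (j':ℕ), (B i).sum).1 = 0 :=
      (map_sum (AddMonoidHom.fst (ZMod 3) (ZMod 3 × ZMod (3*t))) (fun i => (B i).sum) _).trans
        (Finset.sum_eq_zero fun i hi => hcomp1 i (hmem_t i hi))
    have hc2 : (∑ i ∈ Finset.Ico (j:ℕ) (j':ℕ), (B i).sum).2.1 = 0 := by
      calc (∑ i ∈ Finset.Ico (j:ℕ) (j':ℕ), (B i).sum).2.1
          = (∑ i ∈ Finset.Ico (j:ℕ) (j':ℕ), ((B i).sum).2).1 := congrArg Prod.fst hsnd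
        _ = ∑ i ∈ Finset.Ico (j:ℕ) (j':ℕ), ((B i).sum).2.1 :=
            map_sum (AddMonoidHom.fst (ZMod 3) (ZMod (3*t))) (fun i => ((B i).sum).2) _
        _ = 0 := Finset.sum_eq_zero fun i hi => hcomp2 i (hmem_t i hi)
    have hc3 : (∑ i ∈ Finset.Ico (j:ℕ) (j':ℕ), (B i).sum).2.2 = 0 := by
      have h22 : (∑ i ∈ Finset.Ico (j:ℕ) (j':ℕ), (B i).sum).2.2
          = ∑ i ∈ Finset.Ico (j:ℕ) (j':ℕ), ((B i).sum).2.2 :=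
        (congrArg Prod.snd hsnd).trans
          (map_sum (AddMonoidHom.snd (ZMod 3) (ZMod (3*t))) (fun i => ((B i).sum).2) _)
      have hcast : ∀ i ∈ Finset.Ico (j:ℕ) (j':ℕ),
          ((B i).sum).2.2 = ((((B i).sum).2.2).val : ZMod (3*t)) := fun i _ =>
        (ZMod.natCast_rightInverse ((B i).sum).2.2).symm
      rw [h22, Finset.sum_congr rfl hcast, ← Nat.cast_sum]
      rw [ZMod.natCast_eq_zero_iff]
      exact hdvd2
    have : (∑ i ∈ Finset.Ico (j:ℕ) (j':ℕ), (B i).sum)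
        = ((0 : ZMod 3), ((0 : ZMod 3), (0 : ZMod (3*t)))) := by
      rw [Prod.ext_iff]
      exact ⟨hc1, by rw [Prod.ext_iff]; exact ⟨hc2, hc3⟩⟩
    rw [this]
    rfl

theorem davenport_z3z3z3t (t : ℕ) (ht : 0 < t) :
    davenport (ZMod 3 × ZMod 3 × ZMod (3 * t)) ≤ 3 * t + 8 := by
  apply Nat.sInf_le
  intro S hS
  exact main_mem t ht S hS
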